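/- Let C be a semisimple rigid monoidal category and M a semisimple module category over C. Then for objects M₁, M₂ of M and X of C there are canonical isomorphisms of internal Homs: Hom̲(X ⊗ M₁, M₂) ≅ Hom̲(M₁, M₂) ⊗ X* and Hom̲(M₁, X ⊗ M₂) ≅ X ⊗ Hom̲(M₁, M₂). -/

import Mathlib

open CategoryTheory MonoidalCategory

/-- A module category structure on a category `M` over a monoidal category `C`. -/
structure ModuleCategoryStruct (C : Type*) [Category C] [MonoidalCategory C]
    (M : Type*) [Category M] where
  smul : C ⥤ M ⥤ M
  assocIso : ∀ X Y : C, smul.obj (X ⊗ Y) ≅ smul.obj Y ⋙ smul.obj X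
  unitIso : smul.obj (𝟙_ C) ≅ 𝟭 M
  assoc_natural : ∀ {X X' Y Y' : C} (f : X ⟶ X') (g : Y ⟶ Y') (m : M),
    (smul.map (f ⊗ₘ g)).app m ≫ (assocIso X' Y').hom.app m =
      (assocIso X Y).hom.app m ≫ (smul.map f).app ((smul.obj Y).obj m) ≫
        (smul.obj X').map ((smul.map g).app m)
  pentagon : ∀ (X Y Z : C) (m : M),
    (smul.map (α_ X Y Z).hom).app m ≫ (assocIso X (Y ⊗ Z)).hom.app m ≫
        (smul.obj X).map ((assocIso Y Z).hom.app m) =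
      (assocIso (X ⊗ Y) Z).hom.app m ≫
        (assocIso X Y).hom.app ((smul.obj Z).obj m)
  triangle : ∀ (X : C) (m : M),
    (smul.map (ρ_ X).hom).app m =
      (assocIso X (𝟙_ C)).hom.app m ≫ (smul.obj X).map (unitIso.hom.app m)

variable {C : Type*} [Category C] [MonoidalCategory C]
  {M : Type*} [Category M]

/-- `h` is an internal Hom object `Hom̲(N₁, N₂)`: it represents `Y ↦ Hom(Y ⊗ N₁, N₂)`,
witnessed by a family of bijections `e` natural in `Y`. -/
def Represents (s : ModuleCategoryStruct C M) {N₁ N₂ : M} {h : C}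
    (e : ∀ Y : C, ((s.smul.obj Y).obj N₁ ⟶ N₂) ≃ (Y ⟶ h)) : Prop :=
  ∀ {Y Y' : C} (g : Y' ⟶ Y) (u : (s.smul.obj Y).obj N₁ ⟶ N₂),
    e Y' ((s.smul.map g).app N₁ ≫ u) = g ≫ e Y u

namespace ModuleCategoryStruct

variable (s : ModuleCategoryStruct C M)

lemma unit_cancel {a b : M} {f g : a ⟶ b}
    (h : (s.smul.obj (𝟙_ C)).map f = (s.smul.obj (𝟙_ C)).map g) : f = g := by
  have hf := s.unitIso.hom.naturality f
  have hg := s.unitIso.hom.naturality g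
  simp only [Functor.id_map] at hf hg
  have : s.unitIso.inv.app a ≫ ((s.smul.obj (𝟙_ C)).map f ≫ s.unitIso.hom.app b) =
      s.unitIso.inv.app a ≫ ((s.smul.obj (𝟙_ C)).map g ≫ s.unitIso.hom.app b) := by rw [h]
  rw [hf, hg] at this
  simpa using this

lemma lambda_tri (Y : C) (m : M) :
    (s.smul.map (λ_ Y).hom).app m =
      (s.assocIso (𝟙_ C) Y).hom.app m ≫ s.unitIso.hom.app ((s.smul.obj Y).obj m) := by
  have P := s.pentagon (𝟙_ C) (𝟙_ C) Y m
  have hα : (α_ (𝟙_ C) (𝟙_ C) Y).hom =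
      ((ρ_ (𝟙_ C)).hom ▷ Y) ≫ ((𝟙_ C) ◁ (λ_ Y).inv) := by
    rw [← MonoidalCategory.triangle, Category.assoc, ← MonoidalCategory.whiskerLeft_comp,
      Iso.hom_inv_id, MonoidalCategory.whiskerLeft_id, Category.comp_id]
  have hD : (s.assocIso (𝟙_ C) (𝟙_ C)).hom.app ((s.smul.obj Y).obj m) =
      (s.smul.map (ρ_ (𝟙_ C)).hom).app ((s.smul.obj Y).obj m) ≫
        (s.smul.obj (𝟙_ C)).map (s.unitIso.inv.app ((s.smul.obj Y).obj m)) := by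
    rw [s.triangle, Category.assoc, ← CategoryTheory.Functor.map_comp, Iso.hom_inv_id_app]
    simp
  have N1 := s.assoc_natural (𝟙 (𝟙_ C)) (λ_ Y).inv m
  simp only [id_tensorHom, CategoryTheory.Functor.map_id, NatTrans.id_app, Category.id_comp] at N1
  have N2 := s.assoc_natural (ρ_ (𝟙_ C)).hom (𝟙 Y) m
  simp only [tensorHom_id, CategoryTheory.Functor.map_id, NatTrans.id_app, Category.comp_id] at N2
  rw [hα] at P
  simp only [CategoryTheory.Functor.map_comp, NatTrans.comp_app, Category.assoc] at P
  rw [reassoc_of% N1, reassoc_of% N2, hD] at P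
  rw [cancel_epi, cancel_epi] at P
  -- P : F.map ((smul.map λ⁻¹).app m) ≫ F.map (a.hom.app m) = F.map (u.inv.app _)
  rw [← CategoryTheory.Functor.map_comp] at P
  have key := s.unit_cancel P
  have inv1 : (s.smul.map (λ_ Y).hom).app m ≫ (s.smul.map (λ_ Y).inv).app m = 𝟙 _ := by
    rw [← NatTrans.comp_app, ← CategoryTheory.Functor.map_comp, Iso.hom_inv_id, CategoryTheory.Functor.map_id, NatTrans.id_app]
  have h2 : (s.assocIso (𝟙_ C) Y).hom.app m =
      (s.smul.map (λ_ Y).hom).app m ≫ s.unitIso.inv.app ((s.smul.obj Y).obj m) := by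
    rw [← key, ← Category.assoc, inv1, Category.id_comp]
  rw [h2, Category.assoc, Iso.inv_hom_id_app]
  simp

noncomputable section
variable (X : C) [HasRightDual X]

/-- Unit of the adjunction `Xᘁ · - ⊣ X · -`. -/
def mUnitNat : 𝟭 M ⟶ s.smul.obj (Xᘁ) ⋙ s.smul.obj X :=
  s.unitIso.inv ≫ s.smul.map (η_ X (Xᘁ)) ≫ (s.assocIso X (Xᘁ)).hom

/-- Counit of the adjunction `Xᘁ · - ⊣ X · -`. -/
def mCounitNat : s.smul.obj X ⋙ s.smul.obj (Xᘁ) ⟶ 𝟭 M :=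
  (s.assocIso (Xᘁ) X).inv ≫ s.smul.map (ε_ X (Xᘁ)) ≫ s.unitIso.hom

lemma mTriangle₁ (m : M) :
    (s.smul.obj (Xᘁ)).map ((s.mUnitNat X).app m) ≫
      (s.mCounitNat X).app ((s.smul.obj (Xᘁ)).obj m) = 𝟙 _ := by
  have P := s.pentagon (Xᘁ) X (Xᘁ) m
  have N1 := s.assoc_natural (𝟙 (Xᘁ)) (η_ X (Xᘁ)) m
  simp only [id_tensorHom, CategoryTheory.Functor.map_id, NatTrans.id_app,
    Functor.comp_obj, Functor.id_obj, Category.id_comp] at N1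
  have N2 := s.assoc_natural (ε_ X (Xᘁ)) (𝟙 (Xᘁ)) m
  simp only [tensorHom_id, CategoryTheory.Functor.map_id, NatTrans.id_app,
    Functor.comp_obj, Functor.id_obj, Category.comp_id] at N2
  have Lam := s.lambda_tri (Xᘁ) m
  have Tri := s.triangle (Xᘁ) m
  have P1 : (s.smul.obj (Xᘁ)).map ((s.assocIso X (Xᘁ)).hom.app m) ≫
      (s.assocIso (Xᘁ) X).inv.app ((s.smul.obj (Xᘁ)).obj m) =
      (s.assocIso (Xᘁ) (X ⊗ (Xᘁ))).inv.app m ≫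
        (s.smul.map (α_ (Xᘁ) X (Xᘁ)).inv).app m ≫
          (s.assocIso ((Xᘁ) ⊗ X) (Xᘁ)).hom.app m := by
    rw [← cancel_epi ((s.assocIso (Xᘁ) (X ⊗ (Xᘁ))).hom.app m),
      ← cancel_epi ((s.smul.map (α_ (Xᘁ) X (Xᘁ)).hom).app m), reassoc_of% P]
    have h1 : (s.smul.map (α_ (Xᘁ) X (Xᘁ)).hom).app m ≫
        (s.smul.map (α_ (Xᘁ) X (Xᘁ)).inv).app m = 𝟙 _ := by
      rw [← NatTrans.comp_app, ← CategoryTheory.Functor.map_comp, Iso.hom_inv_id]; simp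
    simp [Iso.hom_inv_id_app_assoc, reassoc_of% h1]
  have P2 : (s.smul.obj (Xᘁ)).map ((s.smul.map (η_ X (Xᘁ))).app m) ≫
      (s.assocIso (Xᘁ) (X ⊗ (Xᘁ))).inv.app m =
      (s.assocIso (Xᘁ) (𝟙_ C)).inv.app m ≫ (s.smul.map ((Xᘁ) ◁ η_ X (Xᘁ))).app m := by
    rw [← cancel_epi ((s.assocIso (Xᘁ) (𝟙_ C)).hom.app m),
      ← cancel_mono ((s.assocIso (Xᘁ) (X ⊗ (Xᘁ))).hom.app m)]
    simp only [Category.assoc, Iso.inv_hom_id_app, Functor.comp_obj, Functor.id_obj,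
      Category.comp_id, Iso.hom_inv_id_app_assoc]
    rw [← N1]
  have P3 : (s.smul.obj (Xᘁ)).map (s.unitIso.inv.app m) ≫
      (s.assocIso (Xᘁ) (𝟙_ C)).inv.app m = (s.smul.map (ρ_ (Xᘁ)).inv).app m := by
    rw [← cancel_mono ((s.smul.map (ρ_ (Xᘁ)).hom).app m)]
    have h2 : (s.smul.map (ρ_ (Xᘁ)).inv).app m ≫ (s.smul.map (ρ_ (Xᘁ)).hom).app m = 𝟙 _ := by
      rw [← NatTrans.comp_app, ← CategoryTheory.Functor.map_comp, Iso.inv_hom_id]; simp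
    rw [h2, Tri, Category.assoc, Iso.inv_hom_id_app_assoc, ← CategoryTheory.Functor.map_comp,
      Iso.inv_hom_id_app]
    simp
  have Z : (ρ_ (Xᘁ)).inv ≫ ((Xᘁ) ◁ η_ X (Xᘁ)) ≫ (α_ (Xᘁ) X (Xᘁ)).inv ≫
      (ε_ X (Xᘁ) ▷ (Xᘁ)) ≫ (λ_ (Xᘁ)).hom = 𝟙 (Xᘁ) := by
    rw [reassoc_of% (ExactPairing.coevaluation_evaluation X (Xᘁ))]
    simp
  simp only [mUnitNat, mCounitNat, NatTrans.comp_app, CategoryTheory.Functor.map_comp,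
    Category.assoc]
  rw [reassoc_of% P1, reassoc_of% P2, reassoc_of% P3, ← reassoc_of% N2, ← Lam]
  calc (s.smul.map (ρ_ (Xᘁ)).inv).app m ≫ (s.smul.map ((Xᘁ) ◁ η_ X (Xᘁ))).app m ≫
        (s.smul.map (α_ (Xᘁ) X (Xᘁ)).inv).app m ≫
          (s.smul.map (ε_ X (Xᘁ) ▷ (Xᘁ))).app m ≫ (s.smul.map (λ_ (Xᘁ)).hom).app m
      = (s.smul.map ((ρ_ (Xᘁ)).inv ≫ ((Xᘁ) ◁ η_ X (Xᘁ)) ≫ (α_ (Xᘁ) X (Xᘁ)).inv ≫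
          (ε_ X (Xᘁ) ▷ (Xᘁ)) ≫ (λ_ (Xᘁ)).hom)).app m := by
        simp only [CategoryTheory.Functor.map_comp, NatTrans.comp_app, Category.assoc]
    _ = 𝟙 _ := by rw [Z, CategoryTheory.Functor.map_id]; rfl

lemma mTriangle₂ (n : M) :
    (s.mUnitNat X).app ((s.smul.obj X).obj n) ≫
      (s.smul.obj X).map ((s.mCounitNat X).app n) = 𝟙 _ := by
  have P := s.pentagon X (Xᘁ) X n
  have N1 := s.assoc_natural (η_ X (Xᘁ)) (𝟙 X) n
  simp only [tensorHom_id, CategoryTheory.Functor.map_id, NatTrans.id_app,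
    Functor.comp_obj, Functor.id_obj, Category.comp_id] at N1
  have N2 := s.assoc_natural (𝟙 X) (ε_ X (Xᘁ)) n
  simp only [id_tensorHom, CategoryTheory.Functor.map_id, NatTrans.id_app,
    Functor.comp_obj, Functor.id_obj, Category.id_comp] at N2
  have Lam := s.lambda_tri X n
  have Tri := s.triangle X n
  have P1 : (s.assocIso X (Xᘁ)).hom.app ((s.smul.obj X).obj n) ≫
      (s.smul.obj X).map ((s.assocIso (Xᘁ) X).inv.app n) =
      (s.assocIso (X ⊗ (Xᘁ)) X).inv.app n ≫ (s.smul.map (α_ X (Xᘁ) X).hom).app n ≫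
        (s.assocIso X ((Xᘁ) ⊗ X)).hom.app n := by
    rw [← cancel_epi ((s.assocIso (X ⊗ (Xᘁ)) X).hom.app n),
      ← cancel_mono ((s.smul.obj X).map ((s.assocIso (Xᘁ) X).hom.app n))]
    simp only [Category.assoc, Iso.hom_inv_id_app_assoc]
    rw [← CategoryTheory.Functor.map_comp]
    simp only [Iso.inv_hom_id_app, Functor.comp_obj, Functor.id_obj,
      CategoryTheory.Functor.map_id, Category.comp_id]
    rw [← P]
  have P2 : (s.smul.map (η_ X (Xᘁ))).app ((s.smul.obj X).obj n) ≫
      (s.assocIso (X ⊗ (Xᘁ)) X).inv.app n =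
      (s.assocIso (𝟙_ C) X).inv.app n ≫ (s.smul.map (η_ X (Xᘁ) ▷ X)).app n := by
    rw [← cancel_epi ((s.assocIso (𝟙_ C) X).hom.app n),
      ← cancel_mono ((s.assocIso (X ⊗ (Xᘁ)) X).hom.app n)]
    simp only [Category.assoc, Iso.inv_hom_id_app, Functor.comp_obj, Functor.id_obj,
      Category.comp_id, Iso.hom_inv_id_app_assoc]
    rw [← N1]
  have P3 : s.unitIso.inv.app ((s.smul.obj X).obj n) ≫
      (s.assocIso (𝟙_ C) X).inv.app n = (s.smul.map (λ_ X).inv).app n := by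
    rw [← cancel_mono ((s.smul.map (λ_ X).hom).app n)]
    have h2 : (s.smul.map (λ_ X).inv).app n ≫ (s.smul.map (λ_ X).hom).app n = 𝟙 _ := by
      rw [← NatTrans.comp_app, ← CategoryTheory.Functor.map_comp, Iso.inv_hom_id]; simp
    rw [h2, Lam, Category.assoc, Iso.inv_hom_id_app_assoc, Iso.inv_hom_id_app]
    simp
  have Z : (λ_ X).inv ≫ (η_ X (Xᘁ) ▷ X) ≫ (α_ X (Xᘁ) X).hom ≫
      (X ◁ ε_ X (Xᘁ)) ≫ (ρ_ X).hom = 𝟙 X := by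
    rw [reassoc_of% (ExactPairing.evaluation_coevaluation X (Xᘁ))]
    simp
  simp only [mUnitNat, mCounitNat, NatTrans.comp_app, CategoryTheory.Functor.map_comp,
    Category.assoc]
  rw [reassoc_of% P1, reassoc_of% P2, reassoc_of% P3, ← reassoc_of% N2, ← Tri]
  calc (s.smul.map (λ_ X).inv).app n ≫ (s.smul.map (η_ X (Xᘁ) ▷ X)).app n ≫
        (s.smul.map (α_ X (Xᘁ) X).hom).app n ≫
          (s.smul.map (X ◁ ε_ X (Xᘁ))).app n ≫ (s.smul.map (ρ_ X).hom).app n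
      = (s.smul.map ((λ_ X).inv ≫ (η_ X (Xᘁ) ▷ X) ≫ (α_ X (Xᘁ) X).hom ≫
          (X ◁ ε_ X (Xᘁ)) ≫ (ρ_ X).hom)).app n := by
        simp only [CategoryTheory.Functor.map_comp, NatTrans.comp_app, Category.assoc]
    _ = 𝟙 _ := by rw [Z, CategoryTheory.Functor.map_id]; rfl

/-- The adjunction `Xᘁ · - ⊣ X · -` at the level of hom-sets. -/
def adjEquiv (m n : M) :
    ((s.smul.obj (Xᘁ)).obj m ⟶ n) ≃ (m ⟶ (s.smul.obj X).obj n) where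
  toFun f := (s.mUnitNat X).app m ≫ (s.smul.obj X).map f
  invFun g := (s.smul.obj (Xᘁ)).map g ≫ (s.mCounitNat X).app n
  left_inv f := by
    have h := (s.mCounitNat X).naturality f
    simp only [Functor.comp_map, Functor.id_map] at h
    simp only [CategoryTheory.Functor.map_comp, Category.assoc, h]
    rw [← Category.assoc, s.mTriangle₁ X m]
    simp
  right_inv g := by
    have h := (s.mUnitNat X).naturality g
    simp only [Functor.comp_map, Functor.id_map] at h
    simp only [CategoryTheory.Functor.map_comp, Category.assoc]
    rw [← reassoc_of% h, s.mTriangle₂ X n]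
    simp

lemma adjEquiv_symm_natural {m m' n : M} (k : m' ⟶ m) (f : m ⟶ (s.smul.obj X).obj n) :
    (s.adjEquiv X m' n).symm (k ≫ f) =
      (s.smul.obj (Xᘁ)).map k ≫ (s.adjEquiv X m n).symm f := by
  simp [adjEquiv, CategoryTheory.Functor.map_comp, Category.assoc]

end

end ModuleCategoryStruct

/-- A family of bijections `(Y ⟶ A) ≃ (Y ⟶ B)` natural in `Y` yields an isomorphism
`A ≅ B`. -/
lemma iso_of_natEquiv {A B : C} (T : ∀ Y : C, (Y ⟶ A) ≃ (Y ⟶ B))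
    (nat : ∀ {Y Y' : C} (g : Y' ⟶ Y) (u : Y ⟶ A), T Y' (g ≫ u) = g ≫ T Y u) :
    Nonempty (A ≅ B) := by
  have natsymm : ∀ {Y Y' : C} (g : Y' ⟶ Y) (v : Y ⟶ B),
      (T Y').symm (g ≫ v) = g ≫ (T Y).symm v := by
    intro Y Y' g v
    apply (T Y').injective
    rw [Equiv.apply_symm_apply, nat, Equiv.apply_symm_apply]
  refine ⟨⟨T A (𝟙 A), (T B).symm (𝟙 B), ?_, ?_⟩⟩
  · have h := natsymm (T A (𝟙 A)) (𝟙 B)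
    rw [Category.comp_id] at h
    rw [← h, Equiv.symm_apply_apply]
  · have h := nat ((T B).symm (𝟙 B)) (𝟙 A)
    rw [Category.comp_id] at h
    rw [← h, Equiv.apply_symm_apply]

/-- Lemma 5, (3) and (4): for a (semisimple) rigid monoidal category `C`
and a (semisimple) module category `M` over it, with internal Hom objects
`h12 = Hom̲(M₁,M₂)`, `hX2 = Hom̲(X ⊗ M₁, M₂)` and `h1X = Hom̲(M₁, X ⊗ M₂)`, there are
canonical isomorphisms `Hom̲(X ⊗ M₁, M₂) ≅ Hom̲(M₁,M₂) ⊗ Xᘁ` and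
`Hom̲(M₁, X ⊗ M₂) ≅ X ⊗ Hom̲(M₁,M₂)`. -/
theorem internal_hom_twist
    [RigidCategory C] (s : ModuleCategoryStruct C M)
    (M₁ M₂ : M) (X : C) (h12 hX2 h1X : C)
    (e12 : ∀ Y : C, ((s.smul.obj Y).obj M₁ ⟶ M₂) ≃ (Y ⟶ h12))
    (he12 : Represents s e12)
    (eX2 : ∀ Y : C, ((s.smul.obj Y).obj ((s.smul.obj X).obj M₁) ⟶ M₂) ≃ (Y ⟶ hX2))
    (heX2 : Represents s eX2)
    (e1X : ∀ Y : C, ((s.smul.obj Y).obj M₁ ⟶ (s.smul.obj X).obj M₂) ≃ (Y ⟶ h1X))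
    (he1X : Represents s e1X) :
    Nonempty (hX2 ≅ h12 ⊗ (Xᘁ)) ∧ Nonempty (h1X ≅ X ⊗ h12) := by

  constructor
  · -- first isomorphism
    refine iso_of_natEquiv (fun Y =>
      { toFun := fun v => tensorRightHomEquiv Y X (Xᘁ) h12
          (e12 (Y ⊗ X) ((s.assocIso Y X).hom.app M₁ ≫ (eX2 Y).symm v))
        invFun := fun w => eX2 Y ((s.assocIso Y X).inv.app M₁ ≫
          (e12 (Y ⊗ X)).symm ((tensorRightHomEquiv Y X (Xᘁ) h12).symm w))
        left_inv := fun v => by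
          simp [Iso.inv_hom_id_app_assoc]
        right_inv := fun w => by
          simp [Iso.hom_inv_id_app_assoc] }) ?_
    intro Y Y' g v
    simp only [Equiv.coe_fn_mk]
    have s1 : (eX2 Y').symm (g ≫ v) =
        (s.smul.map g).app ((s.smul.obj X).obj M₁) ≫ (eX2 Y).symm v := by
      have h := heX2 g ((eX2 Y).symm v)
      rw [Equiv.apply_symm_apply] at h
      rw [← h, Equiv.symm_apply_apply]
    rw [s1]
    have N := s.assoc_natural g (𝟙 X) M₁
    simp only [tensorHom_id, CategoryTheory.Functor.map_id, NatTrans.id_app,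
      Functor.comp_obj, Functor.id_obj, Category.comp_id] at N
    rw [← reassoc_of% N, he12 (g ▷ X) ((s.assocIso Y X).hom.app M₁ ≫ (eX2 Y).symm v)]
    apply (tensorRightHomEquiv Y' X (Xᘁ) h12).symm.injective
    rw [Equiv.symm_apply_apply, tensorRightHomEquiv_symm_naturality, Equiv.symm_apply_apply]
  · -- second isomorphism
    refine iso_of_natEquiv (fun Y =>
      { toFun := fun v => tensorLeftHomEquiv Y X (Xᘁ) h12
          (e12 ((Xᘁ) ⊗ Y) ((s.assocIso (Xᘁ) Y).hom.app M₁ ≫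
            (s.adjEquiv X ((s.smul.obj Y).obj M₁) M₂).symm ((e1X Y).symm v)))
        invFun := fun w => e1X Y ((s.adjEquiv X ((s.smul.obj Y).obj M₁) M₂)
          ((s.assocIso (Xᘁ) Y).inv.app M₁ ≫
            (e12 ((Xᘁ) ⊗ Y)).symm ((tensorLeftHomEquiv Y X (Xᘁ) h12).symm w)))
        left_inv := fun v => by
          simp [Iso.inv_hom_id_app_assoc]
        right_inv := fun w => by
          simp [Iso.hom_inv_id_app_assoc] }) ?_
    intro Y Y' g v
    simp only [Equiv.coe_fn_mk]
    have s1 : (e1X Y').symm (g ≫ v) = (s.smul.map g).app M₁ ≫ (e1X Y).symm v := by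
      have h := he1X g ((e1X Y).symm v)
      rw [Equiv.apply_symm_apply] at h
      rw [← h, Equiv.symm_apply_apply]
    rw [s1, s.adjEquiv_symm_natural]
    have N := s.assoc_natural (𝟙 (Xᘁ)) g M₁
    simp only [id_tensorHom, CategoryTheory.Functor.map_id, NatTrans.id_app,
      Functor.comp_obj, Functor.id_obj, Category.id_comp] at N
    rw [← reassoc_of% N, he12 ((Xᘁ) ◁ g)]
    apply (tensorLeftHomEquiv Y' X (Xᘁ) h12).symm.injective
    rw [Equiv.symm_apply_apply, tensorLeftHomEquiv_symm_naturality, Equiv.symm_apply_apply]
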